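/- Let n > 2 and, for t ∈ ℝ, let v(t) be the n×n complex matrix whose diagonal entries are -i in positions (1,1),…,(n-1,n-1) and (n-1)·i in position (n,n), whose entry in position (n-1,n) is t and in position (n,n-1) is -t, and whose all other entries are zero. Then for every t ≠ 0, every real number c, and every invertible n×n complex matrix P, one has P·v(t)·P⁻¹ ≠ c·v(0). In other words, for t ≠ 0 the matrix v(t) is not similar to any real scalar multiple of v(0) = diag(-i,…,-i,(n-1)i). -/
import Mathlib


open Matrix Complex

/-- Let `n > 2` and, for `t : ℝ`, let `v t` be the `n×n` complex matrix with diagonal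
entries `-i` in positions `1,…,n-1` and `(n-1)i` in position `n`, entry `t` in
position `(n-1, n)`, entry `-t` in position `(n, n-1)`, and zeros elsewhere (here
positions are 1-indexed; below indices are 0-indexed).  For every `t ≠ 0`, every real
`c` and every invertible complex matrix `P`, one has `P * v t * P⁻¹ ≠ c • v 0`: the
matrix `v t` is not similar to any real scalar multiple of
`v 0 = diag(-i,…,-i,(n-1)i)`. -/
theorem sun_family_not_conjugate
    (n : ℕ) (hn : 2 < n)
    (v : ℝ → Matrix (Fin n) (Fin n) ℂ)
    (hv : ∀ t : ℝ, v t = Matrix.of fun i j : Fin n =>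
      if i = j then (if (i : ℕ) = n - 1 then ((n : ℂ) - 1) * I else -I)
      else if (i : ℕ) = n - 2 ∧ (j : ℕ) = n - 1 then (t : ℂ)
      else if (i : ℕ) = n - 1 ∧ (j : ℕ) = n - 2 then -(t : ℂ)
      else 0) :
    ∀ t : ℝ, t ≠ 0 → ∀ c : ℝ, ∀ P : Matrix (Fin n) (Fin n) ℂ,
      IsUnit P → P * v t * P⁻¹ ≠ c • v 0 := by
  intro t ht c P hP h
  set a : ℂ := (n : ℂ) - 1 with ha
  have hPdet : IsUnit P.det := (Matrix.isUnit_iff_isUnit_det P).mp hP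
  have hPP : P * P⁻¹ = 1 := Matrix.mul_nonsing_inv P hPdet
  have hP'P : P⁻¹ * P = 1 := Matrix.nonsing_inv_mul P hPdet
  have hvt : v t = P⁻¹ * (c • v 0) * P := by
    rw [← h]
    calc v t = (P⁻¹ * P) * v t * (P⁻¹ * P) := by
          rw [hP'P, Matrix.one_mul, Matrix.mul_one]
      _ = P⁻¹ * (P * v t * P⁻¹) * P := by simp only [Matrix.mul_assoc]
  have hsmul : ∀ s : ℂ, P⁻¹ * (s • (1 : Matrix (Fin n) (Fin n) ℂ)) * P
      = s • (1 : Matrix (Fin n) (Fin n) ℂ) := by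
    intro s
    rw [Matrix.mul_smul, Matrix.mul_one, Matrix.smul_mul, hP'P]
  have h1 : v t + (↑c * I) • (1 : Matrix (Fin n) (Fin n) ℂ)
      = P⁻¹ * (c • v 0 + (↑c * I) • 1) * P := by
    rw [Matrix.mul_add, Matrix.add_mul, hsmul, hvt]
  have h2 : v t - (↑c * a * I) • (1 : Matrix (Fin n) (Fin n) ℂ)
      = P⁻¹ * (c • v 0 - (↑c * a * I) • 1) * P := by
    rw [Matrix.mul_sub, Matrix.sub_mul, hsmul, hvt]
  -- entries of v 0
  have v0off : ∀ i k : Fin n, i ≠ k → v 0 i k = 0 := by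
    intro i k hik
    rw [hv 0]
    simp only [Matrix.of_apply, if_neg hik, Complex.ofReal_zero, neg_zero, ite_self]
  have v0diag : ∀ i : Fin n, v 0 i i = if (i : ℕ) = n - 1 then a * I else -I := by
    intro i
    rw [hv 0]
    rw [Matrix.of_apply, if_pos rfl]
  have hmid : (c • v 0 + (↑c * I) • 1) *
      (c • v 0 - (↑c * a * I) • (1 : Matrix (Fin n) (Fin n) ℂ)) = 0 := by
    ext i j
    rw [Matrix.mul_apply, Matrix.zero_apply]
    apply Finset.sum_eq_zero
    intro k _
    by_cases hik : i = k
    · subst hik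
      by_cases hkj : i = j
      · subst hkj
        simp only [Matrix.add_apply, Matrix.sub_apply, Matrix.smul_apply, Matrix.one_apply_eq]
        rw [v0diag i]
        by_cases hi : (i : ℕ) = n - 1
        · rw [if_pos hi]
          simp only [smul_eq_mul, Complex.real_smul, mul_one]
          ring
        · rw [if_neg hi]
          simp only [smul_eq_mul, Complex.real_smul, mul_one]
          ring
      · have hz : (c • v 0 - (↑c * a * I) • (1 : Matrix (Fin n) (Fin n) ℂ)) i j = 0 := by
          rw [Matrix.sub_apply, Matrix.smul_apply, Matrix.smul_apply, v0off i j hkj,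
            Matrix.one_apply_ne hkj, smul_zero, smul_zero, sub_zero]
        rw [hz, mul_zero]
    · have hz : (c • v 0 + (↑c * I) • (1 : Matrix (Fin n) (Fin n) ℂ)) i k = 0 := by
        rw [Matrix.add_apply, Matrix.smul_apply, Matrix.smul_apply, v0off i k hik,
          Matrix.one_apply_ne hik, smul_zero, smul_zero, add_zero]
      rw [hz, zero_mul]
  have hconj : ∀ A B : Matrix (Fin n) (Fin n) ℂ,
      (P⁻¹ * A * P) * (P⁻¹ * B * P) = P⁻¹ * (A * B) * P := by
    intro A B
    rw [Matrix.mul_assoc (P⁻¹ * A) P, ← Matrix.mul_assoc P (P⁻¹ * B) P,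
      ← Matrix.mul_assoc P P⁻¹ B, hPP, Matrix.one_mul, ← Matrix.mul_assoc (P⁻¹ * A) B P,
      Matrix.mul_assoc P⁻¹ A B]
  have hN0 : (v t + (↑c * I) • (1 : Matrix (Fin n) (Fin n) ℂ))
      * (v t - (↑c * a * I) • 1) = 0 := by
    rw [h1, h2, hconj, hmid, Matrix.mul_zero, Matrix.zero_mul]
  -- indices
  have hn2 : n - 2 < n := by omega
  have hn1 : n - 1 < n := by omega
  set p : Fin n := ⟨n - 2, hn2⟩ with hp
  set q : Fin n := ⟨n - 1, hn1⟩ with hq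
  have hpv : (p : ℕ) = n - 2 := rfl
  have hqv : (q : ℕ) = n - 1 := rfl
  have hpq : p ≠ q := by
    intro hcon
    have : (p : ℕ) = (q : ℕ) := by rw [hcon]
    rw [hpv, hqv] at this
    omega
  have hsum : ∀ f : Fin n → ℂ, (∀ k, k ≠ p → k ≠ q → f k = 0) →
      ∑ k, f k = f p + f q := by
    intro f hf
    have h' : ∑ k, f k = ∑ k ∈ ({p, q} : Finset (Fin n)), f k := by
      refine (Finset.sum_subset (Finset.subset_univ _) fun x _ hx => ?_).symm
      simp only [Finset.mem_insert, Finset.mem_singleton] at hx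
      push_neg at hx
      exact hf x hx.1 hx.2
    rw [h', Finset.sum_pair hpq]
  -- entries of v t
  have hpn1 : ¬ (p : ℕ) = n - 1 := by rw [hpv]; omega
  have vpp : v t p p = -I := by
    rw [hv t]
    rw [Matrix.of_apply, if_pos rfl, if_neg hpn1]
  have vpq : v t p q = (t : ℂ) := by
    rw [hv t]
    rw [Matrix.of_apply, if_neg hpq, if_pos ⟨hpv, hqv⟩]
  have vqp : v t q p = -(t : ℂ) := by
    rw [hv t]
    rw [Matrix.of_apply, if_neg (Ne.symm hpq), if_neg, if_pos ⟨hqv, hpv⟩]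
    rintro ⟨h1', -⟩
    rw [hqv] at h1'
    omega
  have vqq : v t q q = a * I := by
    rw [hv t]
    rw [Matrix.of_apply, if_pos rfl, if_pos hqv]
  have voff : ∀ k : Fin n, k ≠ p → k ≠ q → v t p k = 0 := by
    intro k hkp hkq
    rw [hv t]
    rw [Matrix.of_apply, if_neg (Ne.symm hkp), if_neg, if_neg]
    · rintro ⟨h1', -⟩
      exact hpn1 h1'
    · rintro ⟨-, h2'⟩
      exact hkq (Fin.ext (h2'.trans hqv.symm))
  have hrow : ∀ (j : Fin n) (k : Fin n), k ≠ p → k ≠ q →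
      (v t + (↑c * I) • (1 : Matrix (Fin n) (Fin n) ℂ)) p k
        * (v t - (↑c * a * I) • 1) k j = 0 := by
    intro j k hkp hkq
    rw [Matrix.add_apply, Matrix.smul_apply, Matrix.one_apply_ne (Ne.symm hkp),
      voff k hkp hkq, smul_zero, add_zero, zero_mul]
  -- entry (p, q) of the product
  have epq := congrArg (fun M => M p q) hN0
  simp only [Matrix.mul_apply, Matrix.zero_apply] at epq
  rw [hsum _ (hrow q)] at epq
  simp only [Matrix.add_apply, Matrix.sub_apply, Matrix.smul_apply, Matrix.one_apply_eq,
    Matrix.one_apply_ne hpq, Matrix.one_apply_ne (Ne.symm hpq), vpp, vpq, vqq,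
    smul_eq_mul, mul_one, mul_zero, sub_zero, add_zero] at epq
  -- derive c = 1
  have htC : (t : ℂ) ≠ 0 := by exact_mod_cast ht
  have haC : (1 : ℂ) - a ≠ 0 := by
    intro hcon
    rw [ha] at hcon
    have h2n : (n : ℂ) = 2 := by linear_combination -hcon
    have : n = 2 := by exact_mod_cast h2n
    omega
  have hc : (c : ℂ) = 1 := by
    have key : ((c : ℂ) - 1) * ((1 : ℂ) - a) * ((t : ℂ) * I) = 0 := by
      linear_combination epq
    rcases mul_eq_zero.mp key with key' | key'
    · rcases mul_eq_zero.mp key' with h' | h'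
      · linear_combination h'
      · exact absurd h' haC
    · rcases mul_eq_zero.mp key' with h' | h'
      · exact absurd h' htC
      · exact absurd h' Complex.I_ne_zero
  -- entry (p, p) of the product
  have epp := congrArg (fun M => M p p) hN0
  simp only [Matrix.mul_apply, Matrix.zero_apply] at epp
  rw [hsum _ (hrow p)] at epp
  simp only [Matrix.add_apply, Matrix.sub_apply, Matrix.smul_apply, Matrix.one_apply_eq,
    Matrix.one_apply_ne hpq, Matrix.one_apply_ne (Ne.symm hpq), vpp, vpq, vqp,
    smul_eq_mul, mul_one, mul_zero, sub_zero, add_zero] at epp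
  rw [hc] at epp
  have ht2 : (t : ℂ) * (t : ℂ) = 0 := by
    linear_combination -epp
  exact htC (mul_self_eq_zero.mp ht2)
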